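/- If the Boolean function f associated to an n-partite full-correlation box P_f depends on only k < n input variables (say x_1,...,x_k), then P_f is not an extremal point of the non-signaling polytope: P_f = ½P¹ + ½P², where P¹(a|x) = 2^{-(n-1)}·[⊕_{i=1}^k a_i = f(x_1,...,x_k) and ⊕_{i=k+1}^n a_i = 0] (suitably normalized) and P² is the analogous box with both conditions negated, and both P¹ and P² are non-signaling boxes distinct from P_f. -/

import Mathlib

open Finset

noncomputable section

/-- An `n`-partite box: conditional distribution `P x a` of outputs `a` given inputs `x`,
with binary inputs/outputs modeled as `ZMod 2`. -/
abbrev Box (n : ℕ) := (Fin n → ZMod 2) → (Fin n → ZMod 2) → ℝ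

/-- Non-signaling: for every subset `S` of parties, the marginal of the outputs in `S`
depends only on the inputs in `S`. -/
def IsNonSignaling {n : ℕ} (P : Box n) : Prop :=
  ∀ (S : Finset (Fin n)) (x x' : Fin n → ZMod 2), (∀ i ∈ S, x i = x' i) →
    ∀ aS : Fin n → ZMod 2,
      ∑ a ∈ Finset.univ.filter (fun a : Fin n → ZMod 2 => ∀ i ∈ S, a i = aS i), P x a =
      ∑ a ∈ Finset.univ.filter (fun a : Fin n → ZMod 2 => ∀ i ∈ S, a i = aS i), P x' a

/-- A non-signaling box: nonnegative, normalized, non-signaling. -/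
def IsNSBox {n : ℕ} (P : Box n) : Prop :=
  (∀ x a, 0 ≤ P x a) ∧ (∀ x, ∑ a, P x a = 1) ∧ IsNonSignaling P

/-- The full-correlation box associated to the Boolean function `f`. -/
def FCB (n : ℕ) (f : (Fin n → ZMod 2) → ZMod 2) : Box n :=
  fun x a => if (∑ i, a i) = f x then ((2:ℝ)^(n-1))⁻¹ else 0

/-- The `n`-partite Popescu–Rohrlich box. -/
def nPR (n : ℕ) : Box n := FCB n (fun x => ∏ i, x i)

/-- The local box with uniformly correlated outputs of even parity. -/
def Pc (n : ℕ) : Box n := FCB n (fun _ => 0)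

/-- Extremality in the non-signaling polytope. -/
def IsExtremalNS {n : ℕ} (P : Box n) : Prop :=
  IsNSBox P ∧ ∀ (ε : ℝ) (P1 P2 : Box n), 0 < ε → ε < 1 → IsNSBox P1 → IsNSBox P2 →
    (∀ x a, P x a = ε * P1 x a + (1 - ε) * P2 x a) → P1 = P ∧ P2 = P

/-- Locality: convex combination of products of single-party conditional distributions. -/
def IsLocal {n : ℕ} (P : Box n) : Prop :=
  ∃ (m : ℕ) (q : Fin m → ℝ) (s : Fin m → Fin n → ZMod 2 → ZMod 2 → ℝ),
    (∀ r, 0 ≤ q r) ∧ (∑ r, q r = 1) ∧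
    (∀ r i xi ai, 0 ≤ s r i xi ai) ∧ (∀ r i xi, ∑ ai : ZMod 2, s r i xi ai = 1) ∧
    ∀ x a, P x a = ∑ r, q r * ∏ i, s r i (x i) (a i)

/-- `f` is affine: a constant XORed with a subset of the input bits. -/
def IsAffine {n : ℕ} (f : (Fin n → ZMod 2) → ZMod 2) : Prop :=
  ∃ (c : ZMod 2) (S : Finset (Fin n)), ∀ x, f x = c + ∑ i ∈ S, x i

/-- L¹ distance between boxes. -/
def L1dist {n : ℕ} (P Q : Box n) : ℝ := ∑ x, ∑ a, |P x a - Q x a|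

/-- The box `P¹` of Lemma 2: uniform on outputs with `⊕_{i<k} a_i = f(x) + t` and
`⊕_{i≥k} a_i = t`. -/
def lemma2Box (n k : ℕ) (f : (Fin n → ZMod 2) → ZMod 2) (t : ZMod 2) : Box n :=
  fun x a =>
    if (∑ i ∈ Finset.univ.filter (fun i : Fin n => (i : ℕ) < k), a i) = f x + t ∧
       (∑ i ∈ Finset.univ.filter (fun i : Fin n => k ≤ (i : ℕ)), a i) = t
    then ((2:ℝ)^(n-2))⁻¹ else 0

namespace L2aux
variable {n : ℕ}
def flip (j : Fin n) (a : Fin n → ZMod 2) : Fin n → ZMod 2 :=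
  Function.update a j (a j + 1)
lemma flip_apply (j i : Fin n) (a : Fin n → ZMod 2) :
    flip j a i = if i = j then a j + 1 else a i := Function.update_apply a j (a j + 1) i
lemma zmod_add_one_one (u : ZMod 2) : u + 1 + 1 = u := by revert u; decide

lemma zmod_add_self (u : ZMod 2) : u + u = 0 := by revert u; decide
lemma flip_flip (j : Fin n) (a : Fin n → ZMod 2) : flip j (flip j a) = a := by
  funext i
  simp only [flip_apply]
  by_cases h : i = j
  · subst h; simp [zmod_add_one_one]
  · simp [h]
lemma sum_flip_mem (s : Finset (Fin n)) (j : Fin n) (hj : j ∈ s) (a : Fin n → ZMod 2) :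
    ∑ i ∈ s, flip j a i = (∑ i ∈ s, a i) + 1 := by
  rw [Finset.sum_eq_add_sum_sdiff_singleton_of_mem hj (fun i => flip j a i),
      Finset.sum_eq_add_sum_sdiff_singleton_of_mem hj a]
  have h1 : flip j a j = a j + 1 := by simp [flip_apply]
  have h2 : ∑ i ∈ s \ {j}, flip j a i = ∑ i ∈ s \ {j}, a i := by
    apply Finset.sum_congr rfl
    intro i hi
    have : i ≠ j := by simp at hi; exact hi.2
    simp [flip_apply, this]
  rw [h1, h2]; ring
lemma sum_flip_not_mem (s : Finset (Fin n)) (j : Fin n) (hj : j ∉ s) (a : Fin n → ZMod 2) :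
    ∑ i ∈ s, flip j a i = ∑ i ∈ s, a i := by
  apply Finset.sum_congr rfl
  intro i hi
  have : i ≠ j := fun h => hj (h ▸ hi)
  simp [flip_apply, this]

/-- fiber of the two parity sums -/
def fib (n k : ℕ) (u v : ZMod 2) : Finset (Fin n → ZMod 2) :=
  Finset.univ.filter (fun a : Fin n → ZMod 2 =>
    (∑ i ∈ Finset.univ.filter (fun i : Fin n => (i : ℕ) < k), a i) = u ∧
    (∑ i ∈ Finset.univ.filter (fun i : Fin n => k ≤ (i : ℕ)), a i) = v)

lemma fib_card_flipA (k : ℕ) (j : Fin n) (hj : (j : ℕ) < k) (u v : ZMod 2) :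
    (fib n k u v).card = (fib n k (u + 1) v).card := by
  have hjA : j ∈ Finset.univ.filter (fun i : Fin n => (i : ℕ) < k) := by simp [hj]
  have hjB : j ∉ Finset.univ.filter (fun i : Fin n => k ≤ (i : ℕ)) := by simp [hj, Nat.not_le.2 hj]
  apply Finset.card_nbij' (flip j) (flip j)
  · intro a ha
    simp only [fib, Finset.mem_coe, Finset.mem_filter, Finset.mem_univ, true_and] at ha ⊢
    rw [sum_flip_mem _ j hjA, sum_flip_not_mem _ j hjB, ha.1, ha.2]
    exact ⟨rfl, rfl⟩
  · intro a ha
    simp only [fib, Finset.mem_coe, Finset.mem_filter, Finset.mem_univ, true_and] at ha ⊢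
    rw [sum_flip_mem _ j hjA, sum_flip_not_mem _ j hjB, ha.1, ha.2]
    exact ⟨zmod_add_one_one u, rfl⟩
  · intro a _; exact flip_flip j a
  · intro a _; exact flip_flip j a

lemma fib_card_flipB (k : ℕ) (j : Fin n) (hj : k ≤ (j : ℕ)) (u v : ZMod 2) :
    (fib n k u v).card = (fib n k u (v + 1)).card := by
  have hjB : j ∈ Finset.univ.filter (fun i : Fin n => k ≤ (i : ℕ)) := by simp [hj]
  have hjA : j ∉ Finset.univ.filter (fun i : Fin n => (i : ℕ) < k) := by simp [Nat.not_lt.2 hj]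
  apply Finset.card_nbij' (flip j) (flip j)
  · intro a ha
    simp only [fib, Finset.mem_coe, Finset.mem_filter, Finset.mem_univ, true_and] at ha ⊢
    rw [sum_flip_mem _ j hjB, sum_flip_not_mem _ j hjA, ha.1, ha.2]
    exact ⟨rfl, rfl⟩
  · intro a ha
    simp only [fib, Finset.mem_coe, Finset.mem_filter, Finset.mem_univ, true_and] at ha ⊢
    rw [sum_flip_mem _ j hjB, sum_flip_not_mem _ j hjA, ha.1, ha.2]
    exact ⟨rfl, zmod_add_one_one v⟩
  · intro a _; exact flip_flip j a
  · intro a _; exact flip_flip j a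

lemma fib_card (n k : ℕ) (hk : 1 ≤ k) (hkn : k < n) (u v : ZMod 2) :
    (fib n k u v).card = 2 ^ (n - 2) := by
  set j0 : Fin n := ⟨0, by omega⟩
  set jk : Fin n := ⟨k, hkn⟩
  have hA : (j0 : ℕ) < k := hk
  have hB : k ≤ (jk : ℕ) := le_refl k
  have h00 : ∀ u' v' : ZMod 2, (fib n k u' v').card = (fib n k (u'+1) v').card :=
    fun u' v' => fib_card_flipA k j0 hA u' v'
  have h01 : ∀ u' v' : ZMod 2, (fib n k u' v').card = (fib n k u' (v'+1)).card :=
    fun u' v' => fib_card_flipB k jk hB u' v'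
  have keyA : ∀ v' : ZMod 2, (fib n k (0:ZMod 2) v').card = (fib n k 1 v').card := by
    intro v'; have h := h00 0 v'; rwa [zero_add] at h
  have keyB : ∀ u' : ZMod 2, (fib n k u' (0:ZMod 2)).card = (fib n k u' 1).card := by
    intro u'; have h := h01 u' 0; rwa [zero_add] at h
  have hconst : ∀ u' v' : ZMod 2, (fib n k u' v').card = (fib n k u v).card := by
    have base : ∀ u' v' : ZMod 2, (fib n k u' v').card = (fib n k 0 0).card := by
      intro u' v'
      have hu : u' = 0 ∨ u' = 1 := by revert u'; decide
      have hv : v' = 0 ∨ v' = 1 := by revert v'; decide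
      rcases hu with rfl | rfl <;> rcases hv with rfl | rfl
      · rfl
      · rw [← keyB 0]
      · rw [← keyA 0]
      · rw [← keyA 1, ← keyB 0]
    intro u' v'; rw [base u' v', base u v]
  have hpart : ∑ p : ZMod 2 × ZMod 2, (fib n k p.1 p.2).card = 2 ^ n := by
    have hcf := Finset.card_eq_sum_card_fiberwise
      (f := fun a : Fin n → ZMod 2 =>
        ((∑ i ∈ Finset.univ.filter (fun i : Fin n => (i : ℕ) < k), a i),
         (∑ i ∈ Finset.univ.filter (fun i : Fin n => k ≤ (i : ℕ)), a i)))
      (s := Finset.univ) (t := Finset.univ) (fun a _ => Finset.mem_univ _)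
    have hfib : ∀ p : ZMod 2 × ZMod 2,
        Finset.univ.filter (fun a : Fin n → ZMod 2 =>
          ((∑ i ∈ Finset.univ.filter (fun i : Fin n => (i : ℕ) < k), a i),
           (∑ i ∈ Finset.univ.filter (fun i : Fin n => k ≤ (i : ℕ)), a i)) = p)
        = fib n k p.1 p.2 := by
      intro p; ext a; simp [fib, Prod.ext_iff]
    calc ∑ p : ZMod 2 × ZMod 2, (fib n k p.1 p.2).card
        = ∑ p : ZMod 2 × ZMod 2, (Finset.univ.filter (fun a : Fin n → ZMod 2 =>
          ((∑ i ∈ Finset.univ.filter (fun i : Fin n => (i : ℕ) < k), a i),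
           (∑ i ∈ Finset.univ.filter (fun i : Fin n => k ≤ (i : ℕ)), a i)) = p)).card := by
          exact Finset.sum_congr rfl (fun p _ => by rw [hfib p])
      _ = (Finset.univ : Finset (Fin n → ZMod 2)).card := hcf.symm
      _ = 2 ^ n := by simp [Fintype.card_fun]
  have hsum : ∑ p : ZMod 2 × ZMod 2, (fib n k p.1 p.2).card
      = 4 * (fib n k u v).card := by
    rw [Finset.sum_congr rfl (fun p _ => hconst p.1 p.2), Finset.sum_const]
    simp [Fintype.card_prod, mul_comm]
  have h2n : (2:ℕ) ^ n = 2 ^ (n - 2) * 4 := by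
    have : n = (n - 2) + 2 := by omega
    rw [this, pow_add]; norm_num
  rw [hsum, h2n] at hpart
  omega

end L2aux

namespace L2aux

lemma sum_ite_flip {n : ℕ} (k : ℕ) (F : Finset (Fin n → ZMod 2)) (j : Fin n) (hj : (j : ℕ) < k)
    (hF : ∀ a ∈ F, flip j a ∈ F) (c : ℝ) (u v : ZMod 2) :
    (∑ a ∈ F, if (∑ i ∈ Finset.univ.filter (fun i : Fin n => (i : ℕ) < k), a i) = u ∧
        (∑ i ∈ Finset.univ.filter (fun i : Fin n => k ≤ (i : ℕ)), a i) = v then c else 0)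
    = ∑ a ∈ F, if (∑ i ∈ Finset.univ.filter (fun i : Fin n => (i : ℕ) < k), a i) = u + 1 ∧
        (∑ i ∈ Finset.univ.filter (fun i : Fin n => k ≤ (i : ℕ)), a i) = v then c else 0 := by
  have hjA : j ∈ Finset.univ.filter (fun i : Fin n => (i : ℕ) < k) := by simp [hj]
  have hjB : j ∉ Finset.univ.filter (fun i : Fin n => k ≤ (i : ℕ)) := by simp [Nat.not_le.2 hj]
  apply Finset.sum_nbij' (flip j) (flip j) hF hF
    (fun a _ => flip_flip j a) (fun a _ => flip_flip j a)
  intro a _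
  rw [sum_flip_mem _ j hjA, sum_flip_not_mem _ j hjB]
  simp only [add_left_inj]

end L2aux

open L2aux in
/-- if `f` depends only on the first `k < n` variables, then `FCB f` is
a proper mixture of two non-signaling boxes, hence not extremal. -/
theorem fcb_not_extremal_of_dummy_variable (n k : ℕ) (hk : 1 ≤ k) (hkn : k < n)
    (f : (Fin n → ZMod 2) → ZMod 2)
    (hdep : ∀ x x' : Fin n → ZMod 2, (∀ i : Fin n, (i : ℕ) < k → x i = x' i) → f x = f x') :
    IsNSBox (lemma2Box n k f 0) ∧ IsNSBox (lemma2Box n k f 1) ∧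
    lemma2Box n k f 0 ≠ FCB n f ∧ lemma2Box n k f 1 ≠ FCB n f ∧
    (∀ x a, FCB n f x a = (1/2) * lemma2Box n k f 0 x a + (1/2) * lemma2Box n k f 1 x a) ∧
    ¬ IsExtremalNS (FCB n f) := by
  classical
  have hn2 : 2 ≤ n := by omega
  set j0 : Fin n := ⟨0, by omega⟩ with hj0def
  set jk : Fin n := ⟨k, hkn⟩ with hjkdef
  have hj0k : (j0 : ℕ) < k := hk
  have hjkk : k ≤ (jk : ℕ) := le_refl k
  -- the box is an NS box, for each t
  have hnsbox : ∀ t : ZMod 2, IsNSBox (lemma2Box n k f t) := by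
    intro t
    refine ⟨?_, ?_, ?_⟩
    · intro x a
      simp only [lemma2Box]
      split
      · positivity
      · exact le_refl 0
    · intro x
      have hs : ∑ a : Fin n → ZMod 2, lemma2Box n k f t x a
          = ((fib n k (f x + t) t).card : ℝ) * ((2:ℝ)^(n-2))⁻¹ := by
        simp only [lemma2Box]
        rw [Finset.sum_ite, Finset.sum_const_zero, add_zero, Finset.sum_const, nsmul_eq_mul]
        rfl
      rw [hs, fib_card n k hk hkn]
      push_cast
      rw [mul_inv_cancel₀ (by positivity)]
    · intro S x x' hxx' aS
      by_cases hAS : ∀ i : Fin n, (i : ℕ) < k → i ∈ S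
      · have hf : f x = f x' := hdep x x' (fun i hi => hxx' i (hAS i hi))
        exact Finset.sum_congr rfl (fun a _ => by simp only [lemma2Box, hf])
      · push_neg at hAS
        obtain ⟨j, hjk, hjS⟩ := hAS
        set F := Finset.univ.filter (fun a : Fin n → ZMod 2 => ∀ i ∈ S, a i = aS i) with hFdef
        have hF : ∀ a ∈ F, flip j a ∈ F := by
          intro a ha
          simp only [hFdef, Finset.mem_filter, Finset.mem_univ, true_and] at ha ⊢
          intro i hi
          have hij : i ≠ j := fun h => hjS (h ▸ hi)
          rw [flip_apply]
          simp [hij]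
          exact ha i hi
        have key : ∀ w : ZMod 2,
            (∑ a ∈ F, lemma2Box n k f t x a)
            = ∑ a ∈ F, (if (∑ i ∈ Finset.univ.filter (fun i : Fin n => (i : ℕ) < k), a i)
                  = w + (f x + t) ∧
                (∑ i ∈ Finset.univ.filter (fun i : Fin n => k ≤ (i : ℕ)), a i) = t
                then ((2:ℝ)^(n-2))⁻¹ else 0) := by
          intro w
          have hw : w = 0 ∨ w = 1 := by revert w; decide
          rcases hw with rfl | rfl
          · simp only [lemma2Box, zero_add]
          · have h1 := sum_ite_flip k F j hjk hF ((2:ℝ)^(n-2))⁻¹ (f x + t) t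
            simp only [lemma2Box]
            rw [h1]
            apply Finset.sum_congr rfl
            intro a _
            have : f x + t + 1 = 1 + (f x + t) := by ring
            rw [this]
        have hfx' : f x' + t = 0 + (f x + t) ∨ f x' + t = 1 + (f x + t) := by
          have : ∀ w w' : ZMod 2, w' = 0 + w ∨ w' = 1 + w := by decide
          exact this (f x + t) (f x' + t)
        rcases hfx' with h | h
        · rw [key 0]
          apply Finset.sum_congr rfl
          intro a _
          simp only [lemma2Box, h]
        · rw [key 1]
          apply Finset.sum_congr rfl
          intro a _
          simp only [lemma2Box, h]
  -- the mixture identity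
  have hone : (1 : ZMod 2) + 1 = 0 := by decide
  have hmix : ∀ x a, FCB n f x a
      = (1/2) * lemma2Box n k f 0 x a + (1/2) * lemma2Box n k f 1 x a := by
    intro x a
    have hpq : (∑ i, a i) =
        (∑ i ∈ Finset.univ.filter (fun i : Fin n => (i : ℕ) < k), a i) +
        (∑ i ∈ Finset.univ.filter (fun i : Fin n => k ≤ (i : ℕ)), a i) := by
      rw [← Finset.sum_filter_add_sum_filter_not Finset.univ
        (fun i : Fin n => (i : ℕ) < k) a]
      congr 1
      apply Finset.sum_congr _ (fun _ _ => rfl)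
      ext i
      simp [Nat.not_lt]
    have hn1 : ((2:ℝ)^(n-1))⁻¹ = (1/2) * ((2:ℝ)^(n-2))⁻¹ := by
      have h : n - 1 = (n - 2) + 1 := by omega
      rw [h, pow_succ, mul_inv]
      ring
    simp only [FCB, lemma2Box, hpq]
    generalize (∑ i ∈ Finset.univ.filter (fun i : Fin n => (i : ℕ) < k), a i) = p
    generalize (∑ i ∈ Finset.univ.filter (fun i : Fin n => k ≤ (i : ℕ)), a i) = q
    generalize f x = w
    have hp : p = 0 ∨ p = 1 := by revert p; decide
    have hq : q = 0 ∨ q = 1 := by revert q; decide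
    have hw : w = 0 ∨ w = 1 := by revert w; decide
    rcases hp with rfl | rfl <;> rcases hq with rfl | rfl <;> rcases hw with rfl | rfl <;>
      simp [hn1, hone]
  -- distinctness
  have hc12 : ((2:ℝ)^(n-2))⁻¹ ≠ ((2:ℝ)^(n-1))⁻¹ := by
    have hlt : (2:ℝ)^(n-2) < (2:ℝ)^(n-1) := by
      apply pow_lt_pow_right₀ one_lt_two
      omega
    intro h
    exact absurd (inv_injective h) (ne_of_lt hlt)
  have hne : ∀ t : ZMod 2, lemma2Box n k f t ≠ FCB n f := by
    intro t h
    set x0 : Fin n → ZMod 2 := fun _ => 0 with hx0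
    set a0 : Fin n → ZMod 2 :=
      fun i => if i = j0 then f x0 + t else if i = jk then t else 0 with ha0
    have hj0jk : j0 ≠ jk := by
      intro hh
      have := congrArg Fin.val hh
      simp [hj0def, hjkdef] at this
      omega
    have hpa : (∑ i ∈ Finset.univ.filter (fun i : Fin n => (i : ℕ) < k), a0 i)
        = f x0 + t := by
      rw [Finset.sum_eq_single_of_mem j0 (by simp [hj0k])]
      · simp [ha0]
      · intro i hi hij0
        have hik : (i : ℕ) < k := by simp at hi; exact hi
        have hijk : i ≠ jk := by
          intro hh
          rw [hh] at hik
          simp [hjkdef] at hik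
        simp [ha0, hij0, hijk]
    have hqa : (∑ i ∈ Finset.univ.filter (fun i : Fin n => k ≤ (i : ℕ)), a0 i) = t := by
      rw [Finset.sum_eq_single_of_mem jk (by simp [hjkk])]
      · simp [ha0, hj0jk.symm]
      · intro i hi hijk
        have hik : k ≤ (i : ℕ) := by simp at hi; exact hi
        have hij0 : i ≠ j0 := by
          intro hh
          rw [hh] at hik
          simp [hj0def] at hik
          omega
        simp [ha0, hij0, hijk]
    have hbox : lemma2Box n k f t x0 a0 = ((2:ℝ)^(n-2))⁻¹ := by
      simp only [lemma2Box, hpa, hqa, and_self, if_true]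
    have htot : (∑ i, a0 i) = f x0 := by
      have := Finset.sum_filter_add_sum_filter_not Finset.univ
        (fun i : Fin n => (i : ℕ) < k) a0
      have hB : (∑ i ∈ Finset.univ.filter (fun i : Fin n => ¬ (i : ℕ) < k), a0 i) = t := by
        rw [← hqa]
        apply Finset.sum_congr _ (fun _ _ => rfl)
        ext i
        simp [Nat.not_lt]
      rw [hpa, hB] at this
      rw [← this, add_assoc]
      have htt : t + t = 0 := zmod_add_self t
      rw [htt, add_zero]
    have hfcb : FCB n f x0 a0 = ((2:ℝ)^(n-1))⁻¹ := by
      simp only [FCB, htot, if_true]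
    have := congrFun (congrFun h x0) a0
    rw [hbox, hfcb] at this
    exact hc12 this
  refine ⟨hnsbox 0, hnsbox 1, hne 0, hne 1, hmix, ?_⟩
  intro hext
  obtain ⟨-, hdec⟩ := hext
  obtain ⟨h1, -⟩ := hdec (1/2) (lemma2Box n k f 0) (lemma2Box n k f 1)
    (by norm_num) (by norm_num) (hnsbox 0) (hnsbox 1)
    (by intro x a; rw [hmix x a]; norm_num)
  exact hne 0 h1
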